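/- Let n ≥ 1 and let 0 < τ̌ ≤ τ̂ be reals. For each i ∈ {1,…,n} let (t^i_k)_{k∈ℕ} be a sequence of reals with t^i_0 = 0 and τ̌ ≤ t^i_{k+1} − t^i_k ≤ τ̂ for all k. Then for every i and every k ∈ ℕ, the set of real numbers { t ∈ [t^i_k, t^i_{k+1}) : t = t^j_s for some j ∈ {1,…,n} and s ∈ ℕ } has at most (⌊τ̂/τ̌⌋ + 1)(n − 1) + 1 elements, where ⌊τ̂/τ̌⌋ is the greatest integer not exceeding τ̂/τ̌. -/
import Mathlib


/-- In any interval `[tⁱ_k, tⁱ_{k+1})` between two consecutive update times of agent `i`,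
the set of update times of all agents has at most `(⌊τ̂/τ̌⌋ + 1)(n - 1) + 1` elements. -/
theorem update_times_in_interval_bound
    (n : ℕ) (hn : 1 ≤ n)
    (τlo τhi : ℝ) (hτlo : 0 < τlo) (hττ : τlo ≤ τhi)
    (t : Fin n → ℕ → ℝ)
    (ht0 : ∀ i, t i 0 = 0)
    (hstep : ∀ i k, τlo ≤ t i (k + 1) - t i k ∧ t i (k + 1) - t i k ≤ τhi)
    (i : Fin n) (k : ℕ) :
    ({s : ℝ | s ∈ Set.Ico (t i k) (t i (k + 1)) ∧ ∃ j l, t j l = s}).Finite ∧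
    ({s : ℝ | s ∈ Set.Ico (t i k) (t i (k + 1)) ∧ ∃ j l, t j l = s}).ncard
      ≤ (Nat.floor (τhi / τlo) + 1) * (n - 1) + 1 := by
  classical
  set F := Nat.floor (τhi / τlo) with hFdef
  set a := t i k with hadef
  set b := t i (k + 1) with hbdef
  set S : Set ℝ := {s : ℝ | s ∈ Set.Ico a b ∧ ∃ j l, t j l = s} with hSdef
  set L : Fin n → Set ℕ := fun j => {l | t j l ∈ Set.Ico a b} with hLdef
  -- gap lower bound
  have hgap : ∀ (j : Fin n) (l m : ℕ), (m : ℝ) * τlo ≤ t j (l + m) - t j l := by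
    intro j l m
    induction m with
    | zero => simp
    | succ m ih =>
      have h := (hstep j (l + m)).1
      have he : l + (m + 1) = (l + m) + 1 := by ring
      rw [he]
      push_cast
      nlinarith
  have hdiff : b - a ≤ τhi := (hstep i k).2
  -- indices of agent j in the interval are within F of each other
  have hspread : ∀ j, ∀ l ∈ L j, ∀ l' ∈ L j, l ≤ l' → l' ≤ l + F := by
    intro j l hl l' hl' hle
    obtain ⟨hl1, hl2⟩ := hl
    obtain ⟨hl1', hl2'⟩ := hl'
    have h1 := hgap j l (l' - l)
    rw [Nat.add_sub_cancel' hle] at h1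
    have h3 : ((l' - l : ℕ) : ℝ) ≤ τhi / τlo := by
      rw [le_div_iff₀ hτlo]
      nlinarith
    have h4 : l' - l ≤ F := Nat.le_floor h3
    omega
  -- each L j is finite with at most F + 1 elements
  have hLj : ∀ j, (L j).Finite ∧ (L j).ncard ≤ F + 1 := by
    intro j
    rcases Set.eq_empty_or_nonempty (L j) with h | h
    · rw [h]; simp
    · set m := sInf (L j) with hm
      have hmem : m ∈ L j := Nat.sInf_mem h
      have hsub : L j ⊆ Set.Icc m (m + F) := by
        intro l hl
        exact ⟨Nat.sInf_le hl, hspread j m hmem l hl (Nat.sInf_le hl)⟩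
      have hfin : (L j).Finite := (Set.finite_Icc _ _).subset hsub
      refine ⟨hfin, ?_⟩
      calc (L j).ncard ≤ (Set.Icc m (m + F)).ncard :=
            Set.ncard_le_ncard hsub (Set.finite_Icc _ _)
        _ = F + 1 := by
            rw [← Finset.coe_Icc, Set.ncard_coe_finset, Nat.card_Icc]
            omega
  -- L i = {k}
  have hmono : StrictMono (t i) := by
    apply strictMono_nat_of_lt_succ
    intro l
    have := (hstep i l).1
    linarith
  have hab : a < b := by
    have := (hstep i k).1
    simp only [hadef, hbdef]
    linarith
  have hLi : L i = {k} := by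
    ext l
    simp only [hLdef, Set.mem_setOf_eq, Set.mem_Ico, Set.mem_singleton_iff]
    constructor
    · rintro ⟨h1, h2⟩
      by_contra hne
      rcases lt_or_gt_of_ne hne with hlt | hgt
      · have : t i l < a := hmono hlt
        linarith
      · have : b ≤ t i l := hmono.monotone hgt
        linarith
    · rintro rfl
      exact ⟨le_refl _, hab⟩
  -- the Finsets of values
  set T : Fin n → Finset ℝ := fun j => (((hLj j).1).image (t j)).toFinset with hTdef
  have hTcard : ∀ j, (T j).card ≤ F + 1 := by
    intro j
    have h1 : (T j).card = (t j '' L j).ncard :=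
      (Set.ncard_eq_toFinset_card _ ((hLj j).1.image _)).symm
    rw [h1]
    exact le_trans (Set.ncard_image_le (hLj j).1) (hLj j).2
  have hTi : (T i).card ≤ 1 := by
    have h1 : (T i).card = (t i '' L i).ncard :=
      (Set.ncard_eq_toFinset_card _ ((hLj i).1.image _)).symm
    rw [h1, hLi]
    simp
  -- S equals the union
  have hSeq : S = ↑(Finset.univ.biUnion T) := by
    ext s
    simp only [hSdef, Set.mem_setOf_eq, Finset.coe_biUnion, Finset.mem_coe,
      Finset.mem_univ, Set.mem_iUnion, Set.iUnion_true, hTdef, Set.Finite.mem_toFinset,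
      Set.mem_image, Set.mem_setOf_eq]
    constructor
    · rintro ⟨hs, j, l, rfl⟩
      exact ⟨j, l, hs, rfl⟩
    · rintro ⟨j, l, hl, rfl⟩
      exact ⟨hl, j, l, rfl⟩
  constructor
  · rw [hSeq]; exact (Finset.univ.biUnion T).finite_toSet
  · rw [hSeq, Set.ncard_coe_finset]
    calc (Finset.univ.biUnion T).card ≤ ∑ j, (T j).card := Finset.card_biUnion_le
      _ ≤ ∑ j, (if j = i then 1 else F + 1) := by
          apply Finset.sum_le_sum
          intro j _
          by_cases hji : j = i
          · subst hji; simp [hTi]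
          · simp [hji, hTcard j]
      _ = (F + 1) * (n - 1) + 1 := by
          rw [← Finset.sum_erase_add Finset.univ _ (Finset.mem_univ i)]
          have h1 : ∑ x ∈ Finset.univ.erase i, (if x = i then 1 else F + 1)
              = ∑ _x ∈ Finset.univ.erase i, (F + 1) := by
            apply Finset.sum_congr rfl
            intro x hx
            simp [Finset.ne_of_mem_erase hx]
          rw [h1, Finset.sum_const, Finset.card_erase_of_mem (Finset.mem_univ i)]
          simp [Fintype.card_fin, smul_eq_mul, mul_comm]
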